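/- Fix bounds 0 ≤ d_{nm} ≤ e_{nm} and let F be the set of configurations (s_{t1},…,s_{tM}, s_{r1},…,s_{rN}) in ℝ² with ∑_m s_{tm} + ∑_n s_{rn} = 0 and d_{nm} ≤ ‖s_{tm} − s_{rn}‖₂ ≤ e_{nm} for all m, n. For an angle θ set p(θ) = (cos θ, −sin θ) and f_θ(S) = ∑_{m,n} (p(θ)ᵀ(s_{tm} − s_{rn}))². Let θ₁, θ₂ be two angles, Δθ = θ₂ − θ₁, and R = [[cos Δθ, sin Δθ],[−sin Δθ, cos Δθ]]. If S¹ ∈ F maximizes f_{θ₁} over F, then the configuration R·S¹ obtained by applying R to every antenna position belongs to F and maximizes f_{θ₂} over F. -/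

import Mathlib

open Matrix

/-- The feasible set of antenna configurations: center-of-mass constraint and
inter-antenna distance bounds `d_{nm} ≤ ‖s_{tm} − s_{rn}‖₂ ≤ e_{nm}`. -/
def FeasibleConfig (M N : ℕ) (d e : Fin N → Fin M → ℝ)
    (st : Fin M → EuclideanSpace ℝ (Fin 2))
    (sr : Fin N → EuclideanSpace ℝ (Fin 2)) : Prop :=
  (∑ m, st m) + (∑ n, sr n) = 0 ∧
    ∀ n m, d n m ≤ ‖st m - sr n‖ ∧ ‖st m - sr n‖ ≤ e n m

/-- The target direction vector `p(θ) = (cos θ, −sin θ)`. -/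
noncomputable def pvec (θ : ℝ) : EuclideanSpace ℝ (Fin 2) :=
  (WithLp.equiv 2 (Fin 2 → ℝ)).symm ![Real.cos θ, -Real.sin θ]

/-- The single-target objective `f_θ(S) = ∑_{m,n} (p(θ)ᵀ(s_{tm} − s_{rn}))²`. -/
noncomputable def fobj (M N : ℕ) (θ : ℝ)
    (st : Fin M → EuclideanSpace ℝ (Fin 2))
    (sr : Fin N → EuclideanSpace ℝ (Fin 2)) : ℝ :=
  ∑ m, ∑ n, (∑ i, pvec θ i * (st m - sr n) i) ^ 2

/-- Applying a `2 × 2` matrix to a point of the plane. -/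
noncomputable def matApply (A : Matrix (Fin 2) (Fin 2) ℝ)
    (v : EuclideanSpace ℝ (Fin 2)) : EuclideanSpace ℝ (Fin 2) :=
  (WithLp.equiv 2 (Fin 2 → ℝ)).symm (A *ᵥ fun i => v i)

noncomputable def rotm (a : ℝ) : Matrix (Fin 2) (Fin 2) ℝ :=
  !![Real.cos a, Real.sin a; -Real.sin a, Real.cos a]

lemma matApply_apply (A : Matrix (Fin 2) (Fin 2) ℝ) (v : EuclideanSpace ℝ (Fin 2)) (i : Fin 2) :
    matApply A v i = A i 0 * v 0 + A i 1 * v 1 := by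
  fin_cases i <;> simp [matApply, mulVec, dotProduct, Fin.sum_univ_two]

lemma rot0 (a : ℝ) (v : EuclideanSpace ℝ (Fin 2)) :
    matApply (rotm a) v 0 = Real.cos a * v 0 + Real.sin a * v 1 := by
  simp [matApply_apply, rotm]

lemma rot1 (a : ℝ) (v : EuclideanSpace ℝ (Fin 2)) :
    matApply (rotm a) v 1 = -Real.sin a * v 0 + Real.cos a * v 1 := by
  simp [matApply_apply, rotm]

lemma norm_rot (a : ℝ) (v : EuclideanSpace ℝ (Fin 2)) :
    ‖matApply (rotm a) v‖ = ‖v‖ := by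
  have h := Real.sin_sq_add_cos_sq a
  rw [EuclideanSpace.norm_eq, EuclideanSpace.norm_eq]
  simp only [Fin.sum_univ_two, rot0, rot1]
  congr 1
  simp only [Real.norm_eq_abs, sq_abs]
  linear_combination (v 0 ^ 2 + v 1 ^ 2) * h

lemma matApply_sub (A : Matrix (Fin 2) (Fin 2) ℝ) (u v : EuclideanSpace ℝ (Fin 2)) :
    matApply A (u - v) = matApply A u - matApply A v := by
  ext i
  fin_cases i <;> simp [matApply_apply] <;> ring

lemma matApply_sum {ι : Type*} (A : Matrix (Fin 2) (Fin 2) ℝ) (s : Finset ι)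
    (f : ι → EuclideanSpace ℝ (Fin 2)) :
    matApply A (∑ x ∈ s, f x) = ∑ x ∈ s, matApply A (f x) := by
  ext i
  have hs : ∀ j : Fin 2, (∑ x ∈ s, f x) j = ∑ x ∈ s, f x j := fun j =>
    by simp
  have hs' : ∀ j : Fin 2, (∑ x ∈ s, matApply A (f x)) j = ∑ x ∈ s, matApply A (f x) j :=
    fun j => by simp
  fin_cases i <;>
    simp [matApply_apply, hs, hs', Finset.mul_sum, ← Finset.sum_add_distrib]

lemma matApply_add (A : Matrix (Fin 2) (Fin 2) ℝ) (u v : EuclideanSpace ℝ (Fin 2)) :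
    matApply A (u + v) = matApply A u + matApply A v := by
  ext i
  fin_cases i <;> simp [matApply_apply] <;> ring

lemma matApply_zero (A : Matrix (Fin 2) (Fin 2) ℝ) :
    matApply A (0 : EuclideanSpace ℝ (Fin 2)) = 0 := by
  ext i
  fin_cases i <;> simp [matApply_apply]

lemma key (θ₁ θ₂ : ℝ) (v : EuclideanSpace ℝ (Fin 2)) :
    ∑ i, pvec θ₂ i * matApply (rotm (θ₂ - θ₁)) v i = ∑ i, pvec θ₁ i * v i := by
  simp only [Fin.sum_univ_two, rot0, rot1, pvec]
  simp only [WithLp.equiv_symm_apply, PiLp.toLp_apply, Matrix.cons_val_zero, Matrix.cons_val_one, Matrix.head_cons]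
  have h1 : Real.cos θ₂ * Real.cos (θ₂ - θ₁) + Real.sin θ₂ * Real.sin (θ₂ - θ₁) = Real.cos θ₁ := by
    have h1' := Real.cos_sub θ₂ (θ₂ - θ₁)
    rw [show θ₂ - (θ₂ - θ₁) = θ₁ by ring] at h1'
    linarith
  have h2 : Real.cos θ₂ * Real.sin (θ₂ - θ₁) - Real.sin θ₂ * Real.cos (θ₂ - θ₁) = -Real.sin θ₁ := by
    have h2' := Real.sin_sub θ₂ (θ₂ - θ₁)
    rw [show θ₂ - (θ₂ - θ₁) = θ₁ by ring] at h2'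
    linarith
  linear_combination v 0 * h1 + v 1 * h2

lemma feas_rot (M N : ℕ) (d e : Fin N → Fin M → ℝ) (a : ℝ)
    (st : Fin M → EuclideanSpace ℝ (Fin 2)) (sr : Fin N → EuclideanSpace ℝ (Fin 2))
    (h : FeasibleConfig M N d e st sr) :
    FeasibleConfig M N d e (fun m => matApply (rotm a) (st m))
      (fun n => matApply (rotm a) (sr n)) := by
  obtain ⟨h1, h2⟩ := h
  constructor
  · rw [← matApply_sum, ← matApply_sum, ← matApply_add, h1, matApply_zero]
  · intro n m
    rw [← matApply_sub, norm_rot]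
    exact h2 n m

lemma fobj_rot (M N : ℕ) (θ₁ θ₂ : ℝ)
    (st : Fin M → EuclideanSpace ℝ (Fin 2)) (sr : Fin N → EuclideanSpace ℝ (Fin 2)) :
    fobj M N θ₂ (fun m => matApply (rotm (θ₂ - θ₁)) (st m))
      (fun n => matApply (rotm (θ₂ - θ₁)) (sr n)) = fobj M N θ₁ st sr := by
  unfold fobj
  refine Finset.sum_congr rfl fun m _ => Finset.sum_congr rfl fun n _ => ?_
  rw [← matApply_sub, key]

/-- Proposition 3 (rotation covariance of the optimal antenna allocation):
if `S¹` maximizes `f_{θ₁}` over the feasible set, then the configuration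
obtained by applying `R = [[cos Δθ, sin Δθ],[−sin Δθ, cos Δθ]]`,
`Δθ = θ₂ − θ₁`, to every antenna position is feasible and maximizes
`f_{θ₂}`. -/
theorem stmt8 (M N : ℕ) (d e : Fin N → Fin M → ℝ)
    (hd : ∀ n m, 0 ≤ d n m) (hde : ∀ n m, d n m ≤ e n m) (θ₁ θ₂ : ℝ)
    (R : Matrix (Fin 2) (Fin 2) ℝ)
    (hR : R = !![Real.cos (θ₂ - θ₁), Real.sin (θ₂ - θ₁);
                 -Real.sin (θ₂ - θ₁), Real.cos (θ₂ - θ₁)])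
    (st : Fin M → EuclideanSpace ℝ (Fin 2))
    (sr : Fin N → EuclideanSpace ℝ (Fin 2))
    (hfeas : FeasibleConfig M N d e st sr)
    (hmax : ∀ st' sr', FeasibleConfig M N d e st' sr' →
      fobj M N θ₁ st' sr' ≤ fobj M N θ₁ st sr) :
    FeasibleConfig M N d e (fun m => matApply R (st m)) (fun n => matApply R (sr n)) ∧
      ∀ st' sr', FeasibleConfig M N d e st' sr' →
        fobj M N θ₂ st' sr' ≤
          fobj M N θ₂ (fun m => matApply R (st m)) (fun n => matApply R (sr n)) := by
  subst hR
  constructor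
  · exact feas_rot M N d e (θ₂ - θ₁) st sr hfeas
  · intro st' sr' hfeas'
    calc fobj M N θ₂ st' sr'
        = fobj M N θ₁ (fun m => matApply (rotm (θ₁ - θ₂)) (st' m))
            (fun n => matApply (rotm (θ₁ - θ₂)) (sr' n)) :=
          (fobj_rot M N θ₂ θ₁ st' sr').symm
      _ ≤ fobj M N θ₁ st sr := hmax _ _ (feas_rot M N d e (θ₁ - θ₂) st' sr' hfeas')
      _ = fobj M N θ₂ (fun m => matApply (rotm (θ₂ - θ₁)) (st m))
            (fun n => matApply (rotm (θ₂ - θ₁)) (sr n)) :=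
          (fobj_rot M N θ₁ θ₂ st sr).symm
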